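/- For every integer k ≥ 1 and every z > 0, the steady-state densities satisfy the first-order recursion 𝒜_k′(z) = −(B/(2k)) · z · 𝒜_{k−1}(z), where 𝒜_k′ denotes the derivative with respect to z. -/

import Mathlib

open Real MeasureTheory Set

/-- Pointwise exponential-decay bound for the integrand. -/
lemma expBoundAux (a w lam : ℝ) (hw : 0 < w) (hlam : 0 < lam) :
    ∃ K : ℝ, ∀ s ∈ Ioi (0:ℝ),
      s ^ a * Real.exp (-lam * s - w / (4 * lam * s)) ≤ K * Real.exp (-(lam / 2) * s) := by
  obtain ⟨c, hcdef, hc⟩ : ∃ c : ℝ, c = w / (4 * lam) ∧ 0 < c := ⟨_, rfl, by positivity⟩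
  set m : ℕ := ⌈|a|⌉₊ with hm
  have ham : |a| ≤ (m : ℝ) := Nat.le_ceil _
  refine ⟨(m.factorial : ℝ) / c ^ m + (m.factorial : ℝ) * (2 / lam) ^ m, fun s hs => ?_⟩
  have hs0 : (0:ℝ) < s := hs
  have hws : w / (4 * lam * s) = c / s := by rw [hcdef, div_div]
  have hsplit : Real.exp (-lam * s - w / (4 * lam * s))
      = Real.exp (-(lam / 2) * s) * Real.exp (-(lam / 2) * s - c / s) := by
    rw [← Real.exp_add, hws]; ring_nf
  have hmain : s ^ a * Real.exp (-(lam / 2) * s - c / s)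
      ≤ (m.factorial : ℝ) / c ^ m + (m.factorial : ℝ) * (2 / lam) ^ m := by
    rcases le_total s 1 with hs1 | hs1
    · -- small s
      have h1 : s ^ a ≤ s ^ (-(m : ℝ)) :=
        Real.rpow_le_rpow_of_exponent_ge hs0 hs1 (by linarith [neg_abs_le a])
      have h2 : Real.exp (-(lam / 2) * s - c / s) ≤ Real.exp (-(c / s)) := by
        apply Real.exp_le_exp.2; nlinarith
      have hp : (c / s) ^ m / (m.factorial : ℝ) ≤ Real.exp (c / s) :=
        Real.pow_div_factorial_le_exp _ (by positivity) m
      have h3 : Real.exp (-(c / s)) ≤ (m.factorial : ℝ) * s ^ m / c ^ m := by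
        rw [Real.exp_neg]
        rw [inv_le_comm₀ (Real.exp_pos _) (by positivity)]
        calc ((m.factorial : ℝ) * s ^ m / c ^ m)⁻¹ = (c / s) ^ m / (m.factorial : ℝ) := by
              rw [div_pow]; field_simp
          _ ≤ Real.exp (c / s) := hp
      have h4 : s ^ (-(m : ℝ)) * ((m.factorial : ℝ) * s ^ m / c ^ m) = (m.factorial : ℝ) / c ^ m := by
        rw [Real.rpow_neg hs0.le, Real.rpow_natCast]
        field_simp
      have h5 : s ^ a * Real.exp (-(lam / 2) * s - c / s)
          ≤ s ^ (-(m : ℝ)) * ((m.factorial : ℝ) * s ^ m / c ^ m) := by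
        apply mul_le_mul h1 (h2.trans h3) (Real.exp_nonneg _) (Real.rpow_nonneg hs0.le _)
      rw [h4] at h5
      have : (0:ℝ) ≤ (m.factorial : ℝ) * (2 / lam) ^ m := by positivity
      linarith
    · -- large s
      have h1 : s ^ a ≤ s ^ (m : ℝ) :=
        Real.rpow_le_rpow_of_exponent_le hs1 ((le_abs_self a).trans ham)
      have h2 : Real.exp (-(lam / 2) * s - c / s) ≤ Real.exp (-(lam / 2 * s)) := by
        apply Real.exp_le_exp.2
        have : 0 < c / s := by positivity
        nlinarith
      have hp : (lam / 2 * s) ^ m / (m.factorial : ℝ) ≤ Real.exp (lam / 2 * s) :=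
        Real.pow_div_factorial_le_exp _ (by positivity) m
      have h3 : Real.exp (-(lam / 2 * s)) ≤ (m.factorial : ℝ) / (lam / 2 * s) ^ m := by
        rw [Real.exp_neg]
        rw [inv_le_comm₀ (Real.exp_pos _) (by positivity)]
        calc ((m.factorial : ℝ) / (lam / 2 * s) ^ m)⁻¹ = (lam / 2 * s) ^ m / (m.factorial : ℝ) := by
              rw [inv_div]
          _ ≤ Real.exp (lam / 2 * s) := hp
      have h4 : s ^ (m : ℝ) * ((m.factorial : ℝ) / (lam / 2 * s) ^ m) = (m.factorial : ℝ) * (2 / lam) ^ m := by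
        rw [Real.rpow_natCast, mul_pow, div_pow]
        field_simp
        rw [← mul_pow]; congr 1; field_simp
      have h5 : s ^ a * Real.exp (-(lam / 2) * s - c / s)
          ≤ s ^ (m : ℝ) * ((m.factorial : ℝ) / (lam / 2 * s) ^ m) := by
        apply mul_le_mul h1 (h2.trans h3) (Real.exp_nonneg _) (Real.rpow_nonneg hs0.le _)
      rw [h4] at h5
      have : (0:ℝ) ≤ (m.factorial : ℝ) / c ^ m := by positivity
      linarith
  calc s ^ a * Real.exp (-lam * s - w / (4 * lam * s))
      = (s ^ a * Real.exp (-(lam / 2) * s - c / s)) * Real.exp (-(lam / 2) * s) := by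
        rw [hsplit]; ring
    _ ≤ ((m.factorial : ℝ) / c ^ m + (m.factorial : ℝ) * (2 / lam) ^ m) * Real.exp (-(lam / 2) * s) :=
        mul_le_mul_of_nonneg_right hmain (Real.exp_nonneg _)

lemma contAux (a w lam : ℝ) (hlam : 0 < lam) :
    ContinuousOn (fun s : ℝ => s ^ a * Real.exp (-lam * s - w / (4 * lam * s))) (Ioi 0) := by
  apply ContinuousOn.mul
  · exact fun s hs =>
      (Real.continuousAt_rpow_const s a (Or.inl (ne_of_gt hs))).continuousWithinAt
  · apply Real.continuous_exp.comp_continuousOn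
    apply ContinuousOn.sub
    · exact (continuous_const.mul continuous_id).continuousOn
    · apply ContinuousOn.div continuousOn_const
        ((continuous_const.mul continuous_id).continuousOn)
      intro s hs
      have : (0:ℝ) < s := hs
      show 4 * lam * s ≠ 0
      positivity

lemma integAux (a w lam : ℝ) (hw : 0 < w) (hlam : 0 < lam) :
    IntegrableOn (fun s : ℝ => s ^ a * Real.exp (-lam * s - w / (4 * lam * s))) (Ioi 0) := by
  obtain ⟨K, hK⟩ := expBoundAux a w lam hw hlam
  have hbint : IntegrableOn (fun s : ℝ => K * Real.exp (-(lam / 2) * s)) (Ioi 0) :=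
    (exp_neg_integrableOn_Ioi 0 (by positivity)).const_mul K
  refine hbint.mono' ((contAux a w lam hlam).aestronglyMeasurable measurableSet_Ioi) ?_
  filter_upwards [ae_restrict_mem measurableSet_Ioi] with s hs
  have hs0 : (0:ℝ) < s := hs
  rw [Real.norm_eq_abs, abs_of_nonneg (by positivity)]
  exact hK s hs

/-- The steady-state generation-`k` density in the normalized distance
`z = |x|√(λ/D)` from the origin:
`𝒜_k(z) = (μ(λB)^k/(k!(4πD)^{n/2})) ∫₀^∞ s^{k−n/2} exp(−λs − z²/(4λs)) ds`. -/
noncomputable def steadyDensity (n : ℕ) (lam D B mu : ℝ) (k : ℕ) (z : ℝ) : ℝ :=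
  (mu * (lam * B) ^ k / ((Nat.factorial k : ℝ) * (4 * π * D) ^ ((n : ℝ) / 2))) *
    ∫ s in Set.Ioi (0:ℝ),
      s ^ ((k : ℝ) - (n : ℝ) / 2) * Real.exp (-lam * s - z ^ 2 / (4 * lam * s))

/-- For `k ≥ 1` and `z > 0`: `𝒜_k′(z) = −(B/(2k)) z 𝒜_{k−1}(z)`. -/
theorem steadyDensity_deriv
    (n : ℕ) (hn : 1 ≤ n) (lam D B mu : ℝ)
    (hlam : 0 < lam) (hD : 0 < D) (hB : 0 < B) (hmu : 0 < mu)
    (k : ℕ) (hk : 1 ≤ k) (z : ℝ) (hz : 0 < z) :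
    deriv (steadyDensity n lam D B mu k) z =
      -(B / (2 * k)) * z * steadyDensity n lam D B mu (k - 1) z := by
  obtain ⟨j, rfl⟩ : ∃ j, k = j + 1 := ⟨k - 1, (Nat.succ_pred_eq_of_pos hk).symm⟩
  set a : ℝ := ((j + 1 : ℕ) : ℝ) - (n : ℝ) / 2 with ha
  set F : ℝ → ℝ → ℝ := fun x s => s ^ a * Real.exp (-lam * s - x ^ 2 / (4 * lam * s)) with hF
  set F' : ℝ → ℝ → ℝ := fun x s =>
    s ^ a * (Real.exp (-lam * s - x ^ 2 / (4 * lam * s)) * -(2 * x / (4 * lam * s))) with hF'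
  have hF'eq : ∀ x : ℝ, ∀ s ∈ Ioi (0:ℝ),
      F' x s = -(x / (2 * lam) * (s ^ (a - 1) * Real.exp (-lam * s - x ^ 2 / (4 * lam * s)))) := by
    intro x s hs
    have hs0 : (0:ℝ) < s := hs
    have hpow : s ^ a = s ^ (a - 1) * s := by
      rw [← Real.rpow_add_one (ne_of_gt hs0) (a - 1)]
      norm_num
    simp only [hF', hpow]
    field_simp
    ring
  have key := hasDerivAt_integral_of_dominated_loc_of_deriv_le
    (μ := volume.restrict (Ioi (0:ℝ))) (F := F) (F' := F') (x₀ := z)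
    (bound := fun s => (3 * z / (4 * lam)) *
      (s ^ (a - 1) * Real.exp (-lam * s - (z ^ 2 / 4) / (4 * lam * s))))
    (s := Metric.ball z (z / 2)) (Metric.ball_mem_nhds z (by positivity))
    (Filter.Eventually.of_forall fun x =>
      (contAux a (x ^ 2) lam hlam).aestronglyMeasurable measurableSet_Ioi)
    (integAux a (z ^ 2) lam (by positivity) hlam)
    ?_ ?_
    (((integAux (a - 1) (z ^ 2 / 4) lam (by positivity) hlam).const_mul _))
    ?_
  · -- conclude
    have hderiv : HasDerivAt (steadyDensity n lam D B mu (j + 1))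
        ((mu * (lam * B) ^ (j + 1) / ((Nat.factorial (j + 1) : ℝ) * (4 * π * D) ^ ((n : ℝ) / 2))) *
          ∫ s in Ioi (0:ℝ), F' z s) z := by
      exact key.2.const_mul _
    rw [hderiv.deriv]
    have hInt : (∫ s in Ioi (0:ℝ), F' z s)
        = -(z / (2 * lam) *
            ∫ s in Ioi (0:ℝ), s ^ (a - 1) * Real.exp (-lam * s - z ^ 2 / (4 * lam * s))) := by
      rw [setIntegral_congr_fun measurableSet_Ioi (fun s hs => hF'eq z s hs)]
      rw [integral_neg, integral_const_mul]
    rw [hInt]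
    have hexp : a - 1 = ((j : ℕ) : ℝ) - (n : ℝ) / 2 := by
      rw [ha]; push_cast; ring
    rw [hexp]
    simp only [steadyDensity, Nat.add_sub_cancel]
    have hP : ((4 : ℝ) * π * D) ^ ((n : ℝ) / 2) ≠ 0 :=
      ne_of_gt (Real.rpow_pos_of_pos (by positivity) _)
    have hfac : ((Nat.factorial j : ℕ) : ℝ) ≠ 0 := Nat.cast_ne_zero.2 (Nat.factorial_ne_zero j)
    rw [Nat.factorial_succ]
    push_cast
    field_simp
    ring
  · -- measurability of F' z
    apply AEStronglyMeasurable.congr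
      ((((contAux (a - 1) (z ^ 2) lam hlam).aestronglyMeasurable
        measurableSet_Ioi)).const_mul (-(z / (2 * lam))))
    filter_upwards [ae_restrict_mem measurableSet_Ioi] with s hs
    rw [hF'eq z s hs]; ring
  · -- bound
    filter_upwards [ae_restrict_mem measurableSet_Ioi] with s hs
    intro x hx
    have hs0 : (0:ℝ) < s := hs
    have hxz : |x - z| < z / 2 := by
      rw [Metric.mem_ball, Real.dist_eq] at hx; exact hx
    obtain ⟨hxa, hxb⟩ := abs_sub_lt_iff.1 hxz
    have hx1 : z / 2 < x := by linarith
    have hx2 : x < 3 * z / 2 := by linarith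
    have hx0 : 0 < x := lt_trans (by positivity) hx1
    rw [hF'eq x s hs, Real.norm_eq_abs, abs_neg,
      abs_of_nonneg (mul_nonneg (by positivity) (by positivity))]
    have h1 : x / (2 * lam) ≤ 3 * z / (4 * lam) := by
      rw [div_le_div_iff₀ (by positivity) (by positivity)]
      nlinarith
    have h2 : Real.exp (-lam * s - x ^ 2 / (4 * lam * s))
        ≤ Real.exp (-lam * s - (z ^ 2 / 4) / (4 * lam * s)) := by
      apply Real.exp_le_exp.2
      have hx3 : z ^ 2 / 4 ≤ x ^ 2 := by nlinarith
      have h4 : (z ^ 2 / 4) / (4 * lam * s) ≤ x ^ 2 / (4 * lam * s) := by gcongr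
      linarith
    exact mul_le_mul h1 (mul_le_mul_of_nonneg_left h2 (Real.rpow_nonneg hs0.le _))
      (by positivity) (by positivity)
  · -- differentiability
    filter_upwards [ae_restrict_mem measurableSet_Ioi] with s hs
    intro x hx
    have h1 := hasDerivAt_pow 2 x
    have h2 := (h1.div_const (4 * lam * s)).const_sub (-lam * s)
    have h3 := h2.exp
    have h4 := h3.const_mul (s ^ a)
    exact h4.congr_deriv (by norm_num [hF'])
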